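/- (Corollary to Cartan's classification: decomposition of an orthogonal connection's torsion endomorphism.) Let V be a finite-dimensional real inner product space with dim V > 3, and let A : V×V → V be a skew-adjoint torsion endomorphism, i.e. a bilinear map with ⟨A(X,Y),Z⟩ = −⟨Y, A(X,Z)⟩ for all X,Y,Z ∈ V. Then there exist a unique vector v ∈ V, a unique totally antisymmetric trilinear form T ∈ 𝒯₂(V) and a unique Cartan-type trilinear form S ∈ 𝒯₃(V) such that ⟨A(X,Y),Z⟩ = ⟨X,Y⟩⟨v,Z⟩ − ⟨v,Y⟩⟨X,Z⟩ + T(X,Y,Z) + S(X,Y,Z) for all X,Y,Z ∈ V. -/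

import Mathlib

open scoped RealInnerProductSpace BigOperators

variable {V : Type*} [NormedAddCommGroup V] [InnerProductSpace ℝ V] [FiniteDimensional ℝ V]

/-- The space `𝒯(V)` of algebraic torsion tensors: trilinear forms that are
antisymmetric in the last two arguments. -/
def IsTorsionTensor (A : V →ₗ[ℝ] V →ₗ[ℝ] V →ₗ[ℝ] ℝ) : Prop :=
  ∀ X Y Z : V, A X Y Z = - A X Z Y

/-- `𝒯₂(V)`: totally antisymmetric torsion tensors. -/
def IsTotallyAntisymmetricTorsion (A : V →ₗ[ℝ] V →ₗ[ℝ] V →ₗ[ℝ] ℝ) : Prop :=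
  IsTorsionTensor A ∧ ∀ X Y Z : V, A X Y Z = - A Y X Z

/-- The contraction `c₁₂(A)(Z) = ∑ᵢ A(eᵢ, eᵢ, Z)` over an orthonormal basis. -/
noncomputable def c12 (A : V →ₗ[ℝ] V →ₗ[ℝ] V →ₗ[ℝ] ℝ) (Z : V) : ℝ :=
  ∑ i, A (stdOrthonormalBasis ℝ V i) (stdOrthonormalBasis ℝ V i) Z

/-- `𝒯₃(V)`: torsion tensors of Cartan type. -/
def IsCartanTorsion (A : V →ₗ[ℝ] V →ₗ[ℝ] V →ₗ[ℝ] ℝ) : Prop :=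
  IsTorsionTensor A ∧ (∀ X Y Z : V, A X Y Z + A Y Z X + A Z X Y = 0) ∧
    ∀ Z : V, c12 A Z = 0

set_option linter.unusedSectionVars false

noncomputable def triOf (A : V →ₗ[ℝ] V →ₗ[ℝ] V) : V →ₗ[ℝ] V →ₗ[ℝ] V →ₗ[ℝ] ℝ :=
  A.compr₂ (innerₗ V)

@[simp] lemma triOf_apply (A : V →ₗ[ℝ] V →ₗ[ℝ] V) (X Y Z : V) :
    triOf A X Y Z = ⟪A X Y, Z⟫ := rfl

noncomputable def flip23 (B : V →ₗ[ℝ] V →ₗ[ℝ] V →ₗ[ℝ] ℝ) : V →ₗ[ℝ] V →ₗ[ℝ] V →ₗ[ℝ] ℝ where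
  toFun X := (B X).flip
  map_add' x y := by ext; simp
  map_smul' c x := by ext; simp

@[simp] lemma flip23_apply (B : V →ₗ[ℝ] V →ₗ[ℝ] V →ₗ[ℝ] ℝ) (X Y Z : V) :
    flip23 B X Y Z = B X Z Y := rfl

noncomputable def cyc (B : V →ₗ[ℝ] V →ₗ[ℝ] V →ₗ[ℝ] ℝ) : V →ₗ[ℝ] V →ₗ[ℝ] V →ₗ[ℝ] ℝ :=
  (flip23 B).flip

@[simp] lemma cyc_apply (B : V →ₗ[ℝ] V →ₗ[ℝ] V →ₗ[ℝ] ℝ) (X Y Z : V) :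
    cyc B X Y Z = B Y Z X := rfl

noncomputable def vecTri (v : V) : V →ₗ[ℝ] V →ₗ[ℝ] V →ₗ[ℝ] ℝ :=
  (((innerₗ V) : V →ₗ[ℝ] V →ₗ[ℝ] ℝ).compr₂
    (LinearMap.toSpanSingleton ℝ (V →ₗ[ℝ] ℝ) ((innerₗ V) v)))
  + (-1 : ℝ) • flip23 (((innerₗ V) : V →ₗ[ℝ] V →ₗ[ℝ] ℝ).compr₂
    (LinearMap.toSpanSingleton ℝ (V →ₗ[ℝ] ℝ) ((innerₗ V) v)))

@[simp] lemma vecTri_apply (v X Y Z : V) :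
    vecTri v X Y Z = ⟪X, Y⟫ * ⟪v, Z⟫ - ⟪v, Y⟫ * ⟪X, Z⟫ := by
  simp [vecTri, LinearMap.toSpanSingleton_apply]; ring

noncomputable def tr12 (B : V →ₗ[ℝ] V →ₗ[ℝ] V →ₗ[ℝ] ℝ) : V →ₗ[ℝ] ℝ :=
  ∑ i, B (stdOrthonormalBasis ℝ V i) (stdOrthonormalBasis ℝ V i)

lemma c12_eq_tr12 (B : V →ₗ[ℝ] V →ₗ[ℝ] V →ₗ[ℝ] ℝ) (Z : V) : c12 B Z = tr12 B Z := by
  simp [c12, tr12]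

noncomputable def vecOf (A : V →ₗ[ℝ] V →ₗ[ℝ] V) : V :=
  ((Module.finrank ℝ V : ℝ) - 1)⁻¹ •
    (InnerProductSpace.toDual ℝ V).symm (LinearMap.toContinuousLinearMap (tr12 (triOf A)))

lemma inner_vecOf (A : V →ₗ[ℝ] V →ₗ[ℝ] V) (Z : V) :
    ⟪vecOf A, Z⟫ = ((Module.finrank ℝ V : ℝ) - 1)⁻¹ * c12 (triOf A) Z := by
  rw [vecOf, real_inner_smul_left, InnerProductSpace.toDual_symm_apply, c12_eq_tr12]
  simp

lemma totally_antisym_cyc_invariant {B : V →ₗ[ℝ] V →ₗ[ℝ] V →ₗ[ℝ] ℝ}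
    (h : IsTotallyAntisymmetricTorsion B) (X Y Z : V) : B Y Z X = B X Y Z := by
  have h1 := h.1; have h2 := h.2
  have a1 := h2 Y Z X
  have a2 := h1 Z Y X
  have a3 := h2 Z X Y
  have a4 := h1 X Z Y
  linarith


set_option maxHeartbeats 1000000 in
/-- Corollary to Cartan's classification: for `dim V > 3`, the torsion endomorphism of
an orthogonal connection decomposes uniquely into a vectorial part (given by a vector
`v`), a totally antisymmetric part `T ∈ 𝒯₂(V)` and a Cartan-type part `S ∈ 𝒯₃(V)`. -/
theorem torsion_endomorphism_decomposition
    (hdim : 3 < Module.finrank ℝ V)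
    (A : V →ₗ[ℝ] V →ₗ[ℝ] V)
    (hA : ∀ X Y Z : V, ⟪A X Y, Z⟫ = - ⟪Y, A X Z⟫) :
    ∃! p : V × (V →ₗ[ℝ] V →ₗ[ℝ] V →ₗ[ℝ] ℝ) × (V →ₗ[ℝ] V →ₗ[ℝ] V →ₗ[ℝ] ℝ),
      IsTotallyAntisymmetricTorsion p.2.1 ∧ IsCartanTorsion p.2.2 ∧
        ∀ X Y Z : V, ⟪A X Y, Z⟫ =
          ⟪X, Y⟫ * ⟪p.1, Z⟫ - ⟪p.1, Y⟫ * ⟪X, Z⟫ + p.2.1 X Y Z + p.2.2 X Y Z := by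
  set n : ℝ := (Module.finrank ℝ V : ℝ) with hn
  have hn4 : (4 : ℝ) ≤ n := by
    have h4 : (4 : ℕ) ≤ Module.finrank ℝ V := hdim
    rw [hn]
    exact_mod_cast h4
  have hn1 : n - 1 ≠ 0 := by linarith
  set b := stdOrthonormalBasis ℝ V with hb
  set At := triOf A with hAtdef
  set v := vecOf A with hvdef
  set T : V →ₗ[ℝ] V →ₗ[ℝ] V →ₗ[ℝ] ℝ := (3 : ℝ)⁻¹ • (At + cyc At + cyc (cyc At)) with hTdef
  set S : V →ₗ[ℝ] V →ₗ[ℝ] V →ₗ[ℝ] ℝ := At + (-1 : ℝ) • vecTri v + (-1 : ℝ) • T with hSdef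
  -- basic facts
  have h23 : ∀ X Y Z : V, At X Y Z = - At X Z Y := by
    intro X Y Z
    rw [hAtdef]
    simp only [triOf_apply]
    rw [hA X Y Z, real_inner_comm]
  have hTapp : ∀ X Y Z : V, T X Y Z = (3:ℝ)⁻¹ * (At X Y Z + At Y Z X + At Z X Y) := by
    intro X Y Z; simp [hTdef]; ring
  have hSapp : ∀ X Y Z : V, S X Y Z
      = At X Y Z - (⟪X, Y⟫ * ⟪v, Z⟫ - ⟪v, Y⟫ * ⟪X, Z⟫) - T X Y Z := by
    intro X Y Z; simp [hSdef]; ring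
  have hinnv : ∀ Z : V, (n - 1) * ⟪v, Z⟫ = c12 At Z := by
    intro Z
    rw [hvdef, inner_vecOf, ← hAtdef, ← hn]
    field_simp
  -- T is totally antisymmetric
  have hTtor : IsTorsionTensor T := by
    intro X Y Z
    rw [hTapp, hTapp, h23 X Z Y, h23 Z Y X, h23 Y X Z]
    ring
  have hTswap : ∀ X Y Z : V, T X Y Z = - T Y X Z := by
    intro X Y Z
    rw [hTapp, hTapp, h23 Y X Z, h23 X Z Y, h23 Z Y X]
    ring
  have hT2 : IsTotallyAntisymmetricTorsion T := ⟨hTtor, hTswap⟩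
  have hTdiag : ∀ (e Z : V), T e e Z = 0 := by
    intro e Z; have := hTswap e e Z; linarith
  -- S properties
  have hStor : IsTorsionTensor S := by
    intro X Y Z
    rw [hSapp, hSapp, h23 X Y Z, hTtor X Y Z]
    ring
  have hScyc : ∀ X Y Z : V, S X Y Z + S Y Z X + S Z X Y = 0 := by
    intro X Y Z
    rw [hSapp, hSapp, hSapp, hTapp, hTapp, hTapp,
      real_inner_comm Y X, real_inner_comm Z Y, real_inner_comm Z X]
    all_goals ring
  have hdiagsum : ∀ w Z : V, ∑ i, (⟪(b i : V), b i⟫ : ℝ) * ⟪w, Z⟫ = n * ⟪w, Z⟫ := by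
    intro w Z
    have h1 : ∀ i, (⟪(b i : V), b i⟫ : ℝ) = 1 := fun i => by
      have := (stdOrthonormalBasis ℝ V).orthonormal
      rw [orthonormal_iff_ite] at this
      simpa using this i i
    simp [h1, hn]
  have hSc12 : ∀ Z : V, c12 S Z = 0 := by
    intro Z
    have expand : c12 S Z = c12 At Z - (n * ⟪v, Z⟫ - ⟪v, Z⟫) := by
      rw [c12, Finset.sum_congr rfl (fun i _ => hSapp (b i) (b i) Z)]
      rw [Finset.sum_congr rfl (fun i _ => by rw [hTdiag (b i) Z])]
      simp only [sub_zero]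
      rw [Finset.sum_sub_distrib, Finset.sum_sub_distrib, hdiagsum v Z,
        (stdOrthonormalBasis ℝ V).sum_inner_mul_inner v Z]
      rw [c12]
    rw [expand, ← hinnv Z]
    ring
  have heq : ∀ X Y Z : V, ⟪A X Y, Z⟫ =
      ⟪X, Y⟫ * ⟪v, Z⟫ - ⟪v, Y⟫ * ⟪X, Z⟫ + T X Y Z + S X Y Z := by
    intro X Y Z
    rw [hSapp]
    have : At X Y Z = ⟪A X Y, Z⟫ := rfl
    rw [← this]; ring
  refine ⟨⟨v, T, S⟩, ⟨hT2, ⟨hStor, hScyc, hSc12⟩, heq⟩, ?_⟩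
  rintro ⟨v', T', S'⟩ ⟨hT2', ⟨hStor', hScyc', hSc12'⟩, heq'⟩
  -- uniqueness of v'
  have hv' : v' = v := by
    apply ext_inner_right ℝ
    intro Z
    have hsum : ∀ (w : V) (TT SS : V →ₗ[ℝ] V →ₗ[ℝ] V →ₗ[ℝ] ℝ),
        IsTotallyAntisymmetricTorsion TT → (∀ W, c12 SS W = 0) →
        (∀ X Y Z : V, ⟪A X Y, Z⟫ =
          ⟪X, Y⟫ * ⟪w, Z⟫ - ⟪w, Y⟫ * ⟪X, Z⟫ + TT X Y Z + SS X Y Z) →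
        c12 At Z = (n - 1) * ⟪w, Z⟫ := by
      intro w TT SS hTT hSS heqw
      have hTTd : ∀ e W : V, TT e e W = 0 := fun e W => by
        have := hTT.2 e e W; linarith
      have : c12 At Z = ∑ i, (⟪(b i : V), b i⟫ * ⟪w, Z⟫ - ⟪w, b i⟫ * ⟪(b i : V), Z⟫
          + TT (b i) (b i) Z + SS (b i) (b i) Z) := by
        rw [c12]
        exact Finset.sum_congr rfl fun i _ => heqw (b i) (b i) Z
      rw [this]
      simp only [hTTd, add_zero]
      rw [Finset.sum_add_distrib, Finset.sum_sub_distrib, hdiagsum w Z,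
        (stdOrthonormalBasis ℝ V).sum_inner_mul_inner w Z]
      have := hSS Z
      rw [c12] at this
      rw [this]
      ring
    have h1 := hsum v T S hT2 hSc12 heq
    have h2 := hsum v' T' S' hT2' hSc12' heq'
    have : (n - 1) * ⟪v', Z⟫ = (n - 1) * ⟪v, Z⟫ := by rw [← h1, ← h2]
    have := mul_left_cancel₀ hn1 this
    exact this
  -- uniqueness of T'
  have hTS : ∀ X Y Z : V, T X Y Z + S X Y Z = T' X Y Z + S' X Y Z := by
    intro X Y Z
    have e1 := heq X Y Z
    have e2 := heq' X Y Z
    dsimp only at e2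
    rw [hv'] at e2
    linarith
  have hT'eq : ∀ X Y Z : V, T X Y Z = T' X Y Z := by
    intro X Y Z
    have c1 := hTS X Y Z
    have c2 := hTS Y Z X
    have c3 := hTS Z X Y
    have sT := totally_antisym_cyc_invariant hT2 X Y Z
    have sT2 := totally_antisym_cyc_invariant hT2 Y Z X
    have sT' := totally_antisym_cyc_invariant hT2' X Y Z
    have sT2' := totally_antisym_cyc_invariant hT2' Y Z X
    have sS := hScyc X Y Z
    have sS' := hScyc' X Y Z
    -- note: cyc invariance: T Y Z X = T X Y Z, T Z X Y = T (Y Z X applied)...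
    linarith
  have hT'E : T' = T := by
    ext X Y Z
    exact (hT'eq X Y Z).symm
  have hS'E : S' = S := by
    ext X Y Z
    have := hTS X Y Z
    have := hT'eq X Y Z
    linarith
  exact Prod.ext hv' (Prod.ext hT'E hS'E)
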